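/- Let V be a finite set, let G be a nonempty subset of V, and define the Jaccard loss Δ : Set V → ℚ by Δ(M) = 1 − |G \ M| / |G ∪ M|. Then Δ is submodular: for all M ⊆ N ⊆ V and every x ∈ V \ N, Δ(M ∪ {x}) − Δ(M) ≥ Δ(N ∪ {x}) − Δ(N). -/

import Mathlib

lemma jac_aux1 (a b : ℚ) (hb : 1 ≤ b) :
    (1 - (a - 1) / b) - (1 - a / b) = 1 / b := by
  have hb0 : b ≠ 0 := by linarith
  field_simp
  ring

lemma jac_aux2 (a b : ℚ) (hb : 1 ≤ b) :
    (1 - a / (b + 1)) - (1 - a / b) = a / (b * (b + 1)) := by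
  have hb0 : b ≠ 0 := by linarith
  have hb1 : b + 1 ≠ 0 := by linarith
  field_simp
  ring

/-- The Jaccard loss `Δ M = 1 - |G \ M| / |G ∪ M|` (in ℚ), as a function of the
set of mispredictions, is submodular. -/
theorem jaccard_loss_submodular {α : Type*} [DecidableEq α]
    (V G : Finset α) (hGV : G ⊆ V) (hG : G.Nonempty)
    (Δ : Finset α → ℚ)
    (hΔ : ∀ M : Finset α, Δ M = 1 - ((G \ M).card : ℚ) / ((G ∪ M).card : ℚ))
    (M N : Finset α) (hMN : M ⊆ N) (hNV : N ⊆ V)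
    (x : α) (hx : x ∈ V \ N) :
    Δ (M ∪ {x}) - Δ M ≥ Δ (N ∪ {x}) - Δ N := by
  simp only [Finset.mem_sdiff] at hx
  obtain ⟨hxV, hxN⟩ := hx
  have hxM : x ∉ M := fun h => hxN (hMN h)
  have hb1 : (1 : ℚ) ≤ ((G ∪ M).card : ℚ) := by
    have h1 : 1 ≤ (G ∪ M).card :=
      le_trans (Finset.card_pos.mpr hG) (Finset.card_le_card Finset.subset_union_left)
    exact_mod_cast h1
  have hb2 : (1 : ℚ) ≤ ((G ∪ N).card : ℚ) := by
    have h1 : 1 ≤ (G ∪ N).card :=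
      le_trans (Finset.card_pos.mpr hG) (Finset.card_le_card Finset.subset_union_left)
    exact_mod_cast h1
  have hb12 : ((G ∪ M).card : ℚ) ≤ ((G ∪ N).card : ℚ) := by
    exact_mod_cast Finset.card_le_card (Finset.union_subset_union_right hMN)
  have ha12 : ((G \ N).card : ℚ) ≤ ((G \ M).card : ℚ) := by
    exact_mod_cast Finset.card_le_card (Finset.sdiff_subset_sdiff (Finset.Subset.refl G) hMN)
  rw [hΔ, hΔ, hΔ, hΔ]
  by_cases hxG : x ∈ G
  · have hUM : G ∪ (M ∪ {x}) = G ∪ M := by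
      ext y
      simp only [Finset.mem_union, Finset.mem_singleton]
      constructor
      · rintro (h | h | rfl) <;> tauto
      · tauto
    have hUN : G ∪ (N ∪ {x}) = G ∪ N := by
      ext y
      simp only [Finset.mem_union, Finset.mem_singleton]
      constructor
      · rintro (h | h | rfl) <;> tauto
      · tauto
    have hDM : G \ (M ∪ {x}) = (G \ M).erase x := by
      ext y
      simp only [Finset.mem_sdiff, Finset.mem_union, Finset.mem_singleton, Finset.mem_erase]
      tauto
    have hDN : G \ (N ∪ {x}) = (G \ N).erase x := by
      ext y
      simp only [Finset.mem_sdiff, Finset.mem_union, Finset.mem_singleton, Finset.mem_erase]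
      tauto
    have hxGM : x ∈ G \ M := Finset.mem_sdiff.mpr ⟨hxG, hxM⟩
    have hxGN : x ∈ G \ N := Finset.mem_sdiff.mpr ⟨hxG, hxN⟩
    have hcM : ((G \ (M ∪ {x})).card : ℚ) = ((G \ M).card : ℚ) - 1 := by
      rw [hDM, Finset.card_erase_of_mem hxGM]
      have : 1 ≤ (G \ M).card := Finset.card_pos.mpr ⟨x, hxGM⟩
      push_cast [Nat.cast_sub this]
      ring
    have hcN : ((G \ (N ∪ {x})).card : ℚ) = ((G \ N).card : ℚ) - 1 := by
      rw [hDN, Finset.card_erase_of_mem hxGN]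
      have : 1 ≤ (G \ N).card := Finset.card_pos.mpr ⟨x, hxGN⟩
      push_cast [Nat.cast_sub this]
      ring
    rw [hUM, hUN, hcM, hcN, jac_aux1 _ _ hb1, jac_aux1 _ _ hb2]
    exact one_div_le_one_div_of_le (by linarith) hb12
  · have hxGM' : x ∉ G ∪ M := by simp [hxG, hxM]
    have hxGN' : x ∉ G ∪ N := by simp [hxG, hxN]
    have hDM : G \ (M ∪ {x}) = G \ M := by
      ext y
      simp only [Finset.mem_sdiff, Finset.mem_union, Finset.mem_singleton]
      constructor
      · tauto
      · rintro ⟨h1, h2⟩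
        refine ⟨h1, ?_⟩
        rintro (h | rfl) <;> tauto
    have hDN : G \ (N ∪ {x}) = G \ N := by
      ext y
      simp only [Finset.mem_sdiff, Finset.mem_union, Finset.mem_singleton]
      constructor
      · tauto
      · rintro ⟨h1, h2⟩
        refine ⟨h1, ?_⟩
        rintro (h | rfl) <;> tauto
    have hcM : ((G ∪ (M ∪ {x})).card : ℚ) = ((G ∪ M).card : ℚ) + 1 := by
      have : G ∪ (M ∪ {x}) = insert x (G ∪ M) := by
        ext y
        simp only [Finset.mem_union, Finset.mem_singleton, Finset.mem_insert]
        tauto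
      rw [this, Finset.card_insert_of_notMem hxGM']
      push_cast; ring
    have hcN : ((G ∪ (N ∪ {x})).card : ℚ) = ((G ∪ N).card : ℚ) + 1 := by
      have : G ∪ (N ∪ {x}) = insert x (G ∪ N) := by
        ext y
        simp only [Finset.mem_union, Finset.mem_singleton, Finset.mem_insert]
        tauto
      rw [this, Finset.card_insert_of_notMem hxGN']
      push_cast; ring
    rw [hDM, hDN, hcM, hcN, jac_aux2 _ _ hb1, jac_aux2 _ _ hb2]
    apply div_le_div₀ (by positivity) ha12 (by nlinarith) (by nlinarith)
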